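/- Let (ξₙ') and (ξₙ) be interlacing strictly increasing positive sequences, 0 < ξ₁' < ξ₁ < ξ₂' < ξ₂ < ⋯, with Σ 1/ξₙ² < ∞ and Σ 1/ξₙ'² < ∞, let λ ≥ 0, and for 0 < r < ξ₁' define v(r) = −(Σₙ 2r²/(ξₙ'² − r²) + λ·Σₙ 2r²/(ξₙ² − r²)) + c, where c > 0 is a constant. Then v is strictly decreasing on (0, ξ₁') with v(0⁺) = c > 0 and v(r) → −∞ as r → ξ₁'⁻, so v has a unique zero in (0, ξ₁'). -/

import Mathlib

open Set Filter Topology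

section Aux

variable {ξ : ℕ → ℝ} {x0 : ℝ}

lemma aux_sq_lt {r : ℝ} (hr : |r| < x0) : r ^ 2 < x0 ^ 2 := by
  have h := abs_lt.1 hr
  nlinarith [h.1, h.2]

lemma aux_denom_pos {x r : ℝ} (hx : x0 ≤ x) (hr : |r| < x0) (hx0 : 0 < x0) :
    0 < x ^ 2 - r ^ 2 := by
  have h1 : r ^ 2 < x0 ^ 2 := aux_sq_lt hr
  nlinarith

lemma aux_term_nonneg {x r : ℝ} (hx : x0 ≤ x) (hr : |r| < x0) (hx0 : 0 < x0) :
    0 ≤ 2 * r ^ 2 / (x ^ 2 - r ^ 2) :=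
  div_nonneg (by positivity) (aux_denom_pos hx hr hx0).le

lemma aux_term_le {x r m : ℝ} (hx0 : 0 < x0) (hx : x0 ≤ x) (hm : m < x0) (hm0 : 0 ≤ m)
    (hr : |r| ≤ m) :
    2 * r ^ 2 / (x ^ 2 - r ^ 2) ≤ (2 * m ^ 2 / (1 - m ^ 2 / x0 ^ 2)) * (1 / x ^ 2) := by
  have hK : 0 < 1 - m ^ 2 / x0 ^ 2 := by
    have : m ^ 2 < x0 ^ 2 := by nlinarith
    have hx02 : 0 < x0 ^ 2 := by positivity
    rw [sub_pos, div_lt_one hx02]; exact this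
  have hr2 : r ^ 2 ≤ m ^ 2 := by
    have := abs_le.1 hr
    nlinarith [this.1, this.2]
  have hx' : 0 < x := lt_of_lt_of_le hx0 hx
  have hx2 : 0 < x ^ 2 := by positivity
  have h2 : (1 - m ^ 2 / x0 ^ 2) * x ^ 2 ≤ x ^ 2 - r ^ 2 := by
    have hx02 : 0 < x0 ^ 2 := by positivity
    have hxx : x0 ^ 2 ≤ x ^ 2 := by nlinarith
    have : m ^ 2 / x0 ^ 2 * x ^ 2 ≥ m ^ 2 := by
      rw [ge_iff_le, div_mul_eq_mul_div, le_div_iff₀ hx02]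
      nlinarith
    nlinarith
  have h3 : 0 < (1 - m ^ 2 / x0 ^ 2) * x ^ 2 := mul_pos hK hx2
  calc 2 * r ^ 2 / (x ^ 2 - r ^ 2)
      ≤ 2 * m ^ 2 / ((1 - m ^ 2 / x0 ^ 2) * x ^ 2) :=
        div_le_div₀ (by positivity) (by linarith) h3 h2
    _ = (2 * m ^ 2 / (1 - m ^ 2 / x0 ^ 2)) * (1 / x ^ 2) := by
        rw [div_mul_div_comm, mul_one]

lemma aux_summable (hx0 : 0 < x0) (hge : ∀ n, x0 ≤ ξ n)
    (hsum : Summable fun n => 1 / (ξ n) ^ 2) {r : ℝ} (hr : |r| < x0) :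
    Summable (fun n => 2 * r ^ 2 / ((ξ n) ^ 2 - r ^ 2)) := by
  refine Summable.of_nonneg_of_le (fun n => aux_term_nonneg (hge n) hr hx0)
    (fun n => aux_term_le hx0 (hge n) hr (abs_nonneg r) le_rfl) ?_
  exact hsum.mul_left _

lemma aux_tsum_small (hx0 : 0 < x0) (hge : ∀ n, x0 ≤ ξ n)
    (hsum : Summable fun n => 1 / (ξ n) ^ 2) {r : ℝ} (hr0 : 0 < r) (hr : r ≤ x0 / 2) :
    ∑' n, 2 * r ^ 2 / ((ξ n) ^ 2 - r ^ 2) ≤ (8 / 3) * r ^ 2 * ∑' n, 1 / (ξ n) ^ 2 := by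
  have habs : |r| < x0 := by rw [abs_of_pos hr0]; linarith
  have hle : ∀ n, 2 * r ^ 2 / ((ξ n) ^ 2 - r ^ 2) ≤ (8 / 3) * r ^ 2 * (1 / (ξ n) ^ 2) := by
    intro n
    have hx := hge n
    have hx' : 0 < ξ n := lt_of_lt_of_le hx0 hx
    have hx2 : 0 < (ξ n) ^ 2 := by positivity
    have hdenom : (3 / 4) * (ξ n) ^ 2 ≤ (ξ n) ^ 2 - r ^ 2 := by nlinarith
    have h3 : 0 < (3 / 4 : ℝ) * (ξ n) ^ 2 := by positivity
    calc 2 * r ^ 2 / ((ξ n) ^ 2 - r ^ 2)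
        ≤ 2 * r ^ 2 / ((3 / 4) * (ξ n) ^ 2) :=
          div_le_div₀ (by positivity) le_rfl h3 hdenom
      _ = (8 / 3) * r ^ 2 * (1 / (ξ n) ^ 2) := by
          field_simp; ring
  calc ∑' n, 2 * r ^ 2 / ((ξ n) ^ 2 - r ^ 2)
      ≤ ∑' n, (8 / 3) * r ^ 2 * (1 / (ξ n) ^ 2) :=
        Summable.tsum_le_tsum hle (aux_summable hx0 hge hsum habs) (hsum.mul_left _)
    _ = (8 / 3) * r ^ 2 * ∑' n, 1 / (ξ n) ^ 2 := tsum_mul_left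

lemma aux_term_strict {x a b : ℝ} (hx0 : 0 < x0) (hx : x0 ≤ x) (ha : 0 < a) (hab : a < b)
    (hb : b < x0) :
    2 * a ^ 2 / (x ^ 2 - a ^ 2) < 2 * b ^ 2 / (x ^ 2 - b ^ 2) := by
  have hda : 0 < x ^ 2 - a ^ 2 := aux_denom_pos hx (by rw [abs_of_pos ha]; linarith) hx0
  have hdb : 0 < x ^ 2 - b ^ 2 :=
    aux_denom_pos hx (by rw [abs_of_pos (by linarith : (0:ℝ) < b)]; exact hb) hx0
  rw [div_lt_div_iff₀ hda hdb]
  have hba : a ^ 2 < b ^ 2 := by nlinarith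
  have hx' : 0 < x := lt_of_lt_of_le hx0 hx
  nlinarith [sq_nonneg x, mul_pos (sub_pos.2 hba) (by positivity : (0:ℝ) < x ^ 2)]

lemma aux_contOn (hx0 : 0 < x0) (hge : ∀ n, x0 ≤ ξ n)
    (hsum : Summable fun n => 1 / (ξ n) ^ 2) {m : ℝ} (hm0 : 0 ≤ m) (hm : m < x0) :
    ContinuousOn (fun r => ∑' n, 2 * r ^ 2 / ((ξ n) ^ 2 - r ^ 2)) (Ioo (-m) m) := by
  refine continuousOn_tsum (f := fun n r => 2 * r ^ 2 / ((ξ n) ^ 2 - r ^ 2))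
    (u := fun n => (2 * m ^ 2 / (1 - m ^ 2 / x0 ^ 2)) * (1 / (ξ n) ^ 2))
    (fun n => ?_) (hsum.mul_left _) (fun n r hr => ?_)
  · refine ContinuousOn.div (by fun_prop) (by fun_prop) (fun r hr => ?_)
    have habs : |r| < x0 := by
      rw [abs_lt]; exact ⟨by linarith [hr.1], by linarith [hr.2]⟩
    exact (aux_denom_pos (hge n) habs hx0).ne'
  · have habs : |r| < x0 := by
      rw [abs_lt]; exact ⟨by linarith [hr.1], by linarith [hr.2]⟩
    have habsm : |r| ≤ m := by rw [abs_le]; exact ⟨(hr.1).le, (hr.2).le⟩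
    rw [Real.norm_eq_abs, abs_of_nonneg (aux_term_nonneg (hge n) habs hx0)]
    exact aux_term_le hx0 (hge n) hm hm0 habsm

end Aux

theorem stmt_17 (ξ' ξ : ℕ → ℝ) (hpos' : ∀ n, 0 < ξ' n)
    (hinter : ∀ n, ξ' n < ξ n) (hinter2 : ∀ n, ξ n < ξ' (n + 1))
    (hsum : Summable fun n => 1 / (ξ n) ^ 2)
    (hsum' : Summable fun n => 1 / (ξ' n) ^ 2)
    (lam : ℝ) (hlam : 0 ≤ lam) (c : ℝ) (hc : 0 < c)
    (v : ℝ → ℝ)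
    (hv : ∀ r ∈ Ioo 0 (ξ' 0),
      v r = -((∑' n, 2 * r ^ 2 / ((ξ' n) ^ 2 - r ^ 2)) +
              lam * ∑' n, 2 * r ^ 2 / ((ξ n) ^ 2 - r ^ 2)) + c) :
    StrictAntiOn v (Ioo 0 (ξ' 0)) ∧ Tendsto v (𝓝[>] 0) (𝓝 c) ∧
      Tendsto v (𝓝[<] (ξ' 0)) atBot ∧
      ∃! r, r ∈ Ioo 0 (ξ' 0) ∧ v r = 0 := by
  set x0 := ξ' 0 with hx0def
  have hx0 : 0 < x0 := hpos' 0
  have hge' : ∀ n, x0 ≤ ξ' n := by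
    intro n
    induction n with
    | zero => exact le_rfl
    | succ k ih => exact ih.trans (le_of_lt ((hinter k).trans (hinter2 k)))
  have hge : ∀ n, x0 ≤ ξ n := fun n => (hge' n).trans (hinter n).le
  set g1 : ℝ → ℝ := fun r => ∑' n, 2 * r ^ 2 / ((ξ' n) ^ 2 - r ^ 2) with hg1def
  set g2 : ℝ → ℝ := fun r => ∑' n, 2 * r ^ 2 / ((ξ n) ^ 2 - r ^ 2) with hg2def
  set F : ℝ → ℝ := fun r => g1 r + lam * g2 r with hFdef
  have hvF : ∀ r ∈ Ioo 0 x0, v r = -F r + c := hv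
  have habs_of_mem : ∀ {r : ℝ}, r ∈ Ioo 0 x0 → |r| < x0 := by
    intro r hr; rw [abs_of_pos hr.1]; exact hr.2
  -- strict antitonicity
  have hanti : StrictAntiOn v (Ioo 0 x0) := by
    intro a ha b hb hab
    rw [hvF a ha, hvF b hb]
    have h1 : g1 a < g1 b := by
      refine Summable.tsum_lt_tsum_of_nonneg (i := 0)
        (fun n => aux_term_nonneg (hge' n) (habs_of_mem ha) hx0)
        (fun n => (aux_term_strict hx0 (hge' n) ha.1 hab hb.2).le)
        (aux_term_strict hx0 (hge' 0) ha.1 hab hb.2)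
        (aux_summable hx0 hge' hsum' (habs_of_mem hb))
    have h2 : lam * g2 a ≤ lam * g2 b := by
      refine mul_le_mul_of_nonneg_left ?_ hlam
      exact Summable.tsum_le_tsum (fun n => (aux_term_strict hx0 (hge n) ha.1 hab hb.2).le)
        (aux_summable hx0 hge hsum (habs_of_mem ha))
        (aux_summable hx0 hge hsum (habs_of_mem hb))
    simp only [hFdef]
    linarith
  -- tendsto at 0+
  have hT0 : Tendsto v (𝓝[>] (0:ℝ)) (𝓝 c) := by
    have hFsq : Tendsto F (𝓝[>] (0:ℝ)) (𝓝 0) := by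
      have hmem : Ioo (0:ℝ) (min (x0 / 2) x0) ∈ 𝓝[>] (0:ℝ) :=
        Ioo_mem_nhdsGT_of_mem ⟨le_rfl, lt_min (by linarith) hx0⟩
      refine squeeze_zero' (g := fun r =>
          ((8 / 3) * (∑' n, 1 / (ξ' n) ^ 2) + lam * ((8 / 3) * ∑' n, 1 / (ξ n) ^ 2)) * r ^ 2)
        ?_ ?_ ?_
      · filter_upwards [hmem] with r hr
        have habs : |r| < x0 := by rw [abs_of_pos hr.1]; exact hr.2.trans_le (min_le_right _ _)
        have : 0 ≤ ∑' n, 2 * r ^ 2 / ((ξ' n) ^ 2 - r ^ 2) := tsum_nonneg (fun n => aux_term_nonneg (hge' n) habs hx0)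
        have : 0 ≤ ∑' n, 2 * r ^ 2 / ((ξ n) ^ 2 - r ^ 2) := tsum_nonneg (fun n => aux_term_nonneg (hge n) habs hx0)
        simp only [hFdef, hg1def, hg2def]
        positivity
      · show ∀ᶠ r in 𝓝[>] (0:ℝ),
          F r ≤ ((8 / 3) * (∑' n, 1 / (ξ' n) ^ 2) + lam * ((8 / 3) * ∑' n, 1 / (ξ n) ^ 2)) * r ^ 2
        filter_upwards [hmem] with r hr
        have hr0 : 0 < r := hr.1
        have hrhalf : r ≤ x0 / 2 := le_of_lt (hr.2.trans_le (min_le_left _ _))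
        have hb1 := aux_tsum_small hx0 hge' hsum' hr0 hrhalf
        have hb2 := aux_tsum_small hx0 hge hsum hr0 hrhalf
        have hb2' : lam * g2 r ≤ lam * ((8 / 3) * r ^ 2 * ∑' n, 1 / (ξ n) ^ 2) :=
          mul_le_mul_of_nonneg_left hb2 hlam
        simp only [hFdef, hg1def, hg2def]
        nlinarith [hb1, hb2']
      · have : Tendsto (fun r : ℝ =>
            ((8 / 3) * (∑' n, 1 / (ξ' n) ^ 2) + lam * ((8 / 3) * ∑' n, 1 / (ξ n) ^ 2)) * r ^ 2)
            (𝓝 0) (𝓝 0) := by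
          have hcont : Continuous (fun r : ℝ =>
              ((8 / 3) * (∑' n, 1 / (ξ' n) ^ 2) + lam * ((8 / 3) * ∑' n, 1 / (ξ n) ^ 2)) * r ^ 2) :=
            continuous_const.mul (continuous_pow 2)
          simpa using hcont.tendsto 0
        exact this.mono_left nhdsWithin_le_nhds
    have heq : ∀ᶠ r in 𝓝[>] (0:ℝ), (-F r + c) = v r := by
      filter_upwards [Ioo_mem_nhdsGT_of_mem ⟨le_rfl, hx0⟩] with r hr
      exact (hvF r hr).symm
    have : Tendsto (fun r => -F r + c) (𝓝[>] (0:ℝ)) (𝓝 c) := by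
      have := (hFsq.neg).add_const c
      simpa using this
    exact this.congr' heq
  -- tendsto at x0-
  have hTB : Tendsto v (𝓝[<] x0) atBot := by
    have hdenom : Tendsto (fun r : ℝ => x0 ^ 2 - r ^ 2) (𝓝[<] x0) (𝓝[>] (0:ℝ)) := by
      rw [tendsto_nhdsWithin_iff]
      constructor
      · have : Tendsto (fun r : ℝ => x0 ^ 2 - r ^ 2) (𝓝 x0) (𝓝 (x0 ^ 2 - x0 ^ 2)) :=
          (continuous_const.sub (continuous_pow 2)).tendsto x0
        simpa using this.mono_left nhdsWithin_le_nhds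
      · filter_upwards [Ioo_mem_nhdsLT_of_mem ⟨hx0, le_rfl⟩] with r hr
        have : r ^ 2 < x0 ^ 2 := by nlinarith [hr.1, hr.2]
        simpa [mem_Ioi] using by linarith
    have hnum : Tendsto (fun r : ℝ => 2 * r ^ 2) (𝓝[<] x0) (𝓝 (2 * x0 ^ 2)) :=
      ((continuous_const.mul (continuous_pow 2)).tendsto x0).mono_left nhdsWithin_le_nhds
    have hfrac : Tendsto (fun r : ℝ => 2 * r ^ 2 * (x0 ^ 2 - r ^ 2)⁻¹) (𝓝[<] x0) atTop :=
      hnum.pos_mul_atTop (by positivity) (tendsto_inv_nhdsGT_zero.comp hdenom)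
    have hub : Tendsto (fun r : ℝ => -(2 * r ^ 2 * (x0 ^ 2 - r ^ 2)⁻¹) + c) (𝓝[<] x0) atBot := by
      exact tendsto_atBot_add_const_right _ c (tendsto_neg_atTop_atBot.comp hfrac)
    refine tendsto_atBot_mono' _ ?_ hub
    filter_upwards [Ioo_mem_nhdsLT_of_mem ⟨hx0, le_rfl⟩] with r hr
    have habs : |r| < x0 := habs_of_mem hr
    have hfirst : 2 * r ^ 2 / ((ξ' 0) ^ 2 - r ^ 2) ≤ g1 r :=
      Summable.le_tsum (aux_summable hx0 hge' hsum' habs) 0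
        (fun j _ => aux_term_nonneg (hge' j) habs hx0)
    have hg2nn : 0 ≤ lam * g2 r :=
      mul_nonneg hlam (tsum_nonneg (fun n => aux_term_nonneg (hge n) habs hx0))
    rw [hvF r hr]
    have : 2 * r ^ 2 * (x0 ^ 2 - r ^ 2)⁻¹ = 2 * r ^ 2 / ((ξ' 0) ^ 2 - r ^ 2) := by
      rw [div_eq_mul_inv, hx0def]
    rw [this]
    simp only [hFdef]
    linarith
  -- continuity of v on Ioo 0 x0
  have hcontv : ContinuousOn v (Ioo 0 x0) := by
    have hcontF : ∀ r0 ∈ Ioo (0:ℝ) x0, ContinuousAt F r0 := by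
      intro r0 hr0
      obtain ⟨m, hm1, hm2⟩ := exists_between hr0.2
      have hmem : Ioo (-m) m ∈ 𝓝 r0 :=
        Ioo_mem_nhds (by linarith [hr0.1]) hm1
      have hm0 : (0:ℝ) ≤ m := by linarith [hr0.1]
      have h1 : ContinuousAt g1 r0 :=
        (aux_contOn hx0 hge' hsum' hm0 hm2).continuousAt hmem
      have h2 : ContinuousAt g2 r0 :=
        (aux_contOn hx0 hge hsum hm0 hm2).continuousAt hmem
      exact h1.add (continuousAt_const.mul h2)
    have : ContinuousOn (fun r => -F r + c) (Ioo 0 x0) :=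
      fun r hr => (((hcontF r hr).neg).add continuousAt_const).continuousWithinAt
    exact this.congr hvF
  -- existence and uniqueness of the zero
  refine ⟨hanti, hT0, hTB, ?_⟩
  have hEa : ∃ a ∈ Ioo (0:ℝ) x0, 0 < v a := by
    have h1 : ∀ᶠ r in 𝓝[>] (0:ℝ), 0 < v r := hT0.eventually (eventually_gt_nhds hc)
    have h2 : ∀ᶠ r in 𝓝[>] (0:ℝ), r ∈ Ioo (0:ℝ) x0 := Ioo_mem_nhdsGT_of_mem ⟨le_rfl, hx0⟩
    obtain ⟨a, ha1, ha2⟩ := (h2.and h1).exists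
    exact ⟨a, ha1, ha2⟩
  have hEb : ∃ b ∈ Ioo (0:ℝ) x0, v b < 0 := by
    have h1 : ∀ᶠ r in 𝓝[<] x0, v r < 0 := hTB.eventually (eventually_lt_atBot 0)
    have h2 : ∀ᶠ r in 𝓝[<] x0, r ∈ Ioo (0:ℝ) x0 := Ioo_mem_nhdsLT_of_mem ⟨hx0, le_rfl⟩
    obtain ⟨b, hb1, hb2⟩ := (h2.and h1).exists
    exact ⟨b, hb1, hb2⟩
  obtain ⟨a, ha, hva⟩ := hEa
  obtain ⟨b, hb, hvb⟩ := hEb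
  have hab : a < b := by
    rcases lt_trichotomy a b with h | h | h
    · exact h
    · exfalso; rw [h] at hva; linarith
    · exfalso; have := hanti hb ha h; linarith
  have hsub : Icc a b ⊆ Ioo 0 x0 := Icc_subset_Ioo ha.1 hb.2
  have hcont' : ContinuousOn v (Icc a b) := hcontv.mono hsub
  have h0mem : (0:ℝ) ∈ Icc (v b) (v a) := ⟨hvb.le, hva.le⟩
  obtain ⟨r, hrmem, hr0⟩ := intermediate_value_Icc' hab.le hcont' h0mem
  have hrIoo : r ∈ Ioo (0:ℝ) x0 := hsub hrmem
  refine ⟨r, ⟨hrIoo, hr0⟩, ?_⟩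
  intro y hy
  exact hanti.injOn hy.1 hrIoo (by rw [hy.2, hr0])
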